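/- Let d ∈ ℕ. If H is a 3-uniform hypergraph on n > 54(d+1) vertices and δ₁(H) > C(n-1,2) − C(n-d,2) (where C(a,b) denotes the binomial coefficient), then H contains a matching of size at least d. -/

import Mathlib

open Finset

section AUX
variable {α : Type} [DecidableEq α]

lemma aux_choose2 (b j : ℕ) : b.choose 2 + j * b ≤ (b + j).choose 2 := by
  induction j with
  | zero => simp
  | succ j ih =>
    have h : (b + j + 1).choose 2 = (b + j).choose 1 + (b + j).choose 2 :=
      Nat.choose_succ_succ (b + j) 1
    rw [Nat.choose_one_right] at h
    have hb : b + (j + 1) = (b + j) + 1 := by omega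
    rw [hb, h, Nat.succ_mul]
    omega

lemma aux_pick (F : Finset (Finset α))
    (hF : (F : Set (Finset α)).PairwiseDisjoint id) (hcard : 4 ≤ F.card)
    (B : Finset α) (hB : B.card ≤ 3) : ∃ p ∈ F, Disjoint p B := by
  classical
  by_contra hc
  push_neg at hc
  have hmap : ∀ p ∈ F, ∃ x, x ∈ p ∧ x ∈ B := by
    intro p hp
    exact Finset.not_disjoint_iff.1 (hc p hp)
  obtain ⟨p0, hp0⟩ : F.Nonempty := Finset.card_pos.1 (by omega)
  choose f hf1 hf2 using hmap
  set g : Finset α → α := fun p => if h : p ∈ F then f p h else f p0 hp0 with hg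
  have hle : F.card ≤ B.card := by
    apply Finset.card_le_card_of_injOn g
    · intro p hp
      simp only [hg, dif_pos hp]
      simp only [Finset.mem_coe] at hp ⊢
      rw [dif_pos hp]; exact hf2 p hp
    · intro p hp q hq hpq
      simp only [Finset.mem_coe] at hp hq
      simp only [hg, dif_pos hp, dif_pos hq] at hpq
      by_contra hne
      have hd : Disjoint p q := hF hp hq hne
      exact (Finset.disjoint_left.1 hd (hf1 p hp)) (hpq ▸ hf1 q hq)
  omega

lemma aux_cover (G : Finset (Finset α))
    (h2 : ∀ p ∈ G, p.card = 2)
    (hns : ¬ ∃ F, F ⊆ G ∧ (F : Set (Finset α)).PairwiseDisjoint id ∧ F.card = 4) :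
    ∃ C : Finset α, C.card ≤ 6 ∧ ∀ p ∈ G, ¬ Disjoint p C := by
  classical
  set S := G.powerset.filter (fun (F : Finset (Finset α)) => (F : Set (Finset α)).PairwiseDisjoint id) with hS
  have hSne : S.Nonempty := ⟨∅, by simp [hS]⟩
  obtain ⟨F, hFS, hFmax⟩ := S.exists_max_image (fun F => F.card) hSne
  rw [hS, Finset.mem_filter, Finset.mem_powerset] at hFS
  obtain ⟨hFG, hFD⟩ := hFS
  have hF3 : F.card ≤ 3 := by
    by_contra hgt
    obtain ⟨F', hF'F, hF'c⟩ := Finset.exists_subset_card_eq (s := F) (n := 4) (by omega)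
    exact hns ⟨F', hF'F.trans hFG, hFD.subset (Finset.coe_subset.2 hF'F), hF'c⟩
  refine ⟨F.biUnion id, ?_, ?_⟩
  · calc (F.biUnion id).card ≤ ∑ p ∈ F, (id p).card := Finset.card_biUnion_le
      _ = ∑ p ∈ F, 2 := Finset.sum_congr rfl (fun p hp => h2 p (hFG hp))
      _ = 2 * F.card := by rw [Finset.sum_const, smul_eq_mul, mul_comm]
      _ ≤ 6 := by omega
  · intro p hp hd
    have hpne : p.Nonempty := Finset.card_pos.1 (by rw [h2 p hp]; omega)
    have hpF : p ∉ F := by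
      intro hpF
      have : p ⊆ F.biUnion id := Finset.subset_biUnion_of_mem id hpF
      obtain ⟨x, hx⟩ := hpne
      exact (Finset.disjoint_left.1 hd hx) (this hx)
    have hins : insert p F ∈ S := by
      rw [hS, Finset.mem_filter, Finset.mem_powerset]
      refine ⟨Finset.insert_subset hp hFG, ?_⟩
      rw [Finset.coe_insert]
      refine hFD.insert (fun q hq hne => ?_)
      exact Finset.disjoint_of_subset_right (Finset.subset_biUnion_of_mem id hq) hd
    have := hFmax _ hins
    rw [Finset.card_insert_of_notMem hpF] at this
    omega

lemma aux_swap (H M : Finset (Finset α))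
    (hMH : M ⊆ H) (hMD : (M : Set (Finset α)).PairwiseDisjoint id)
    (hmax : ∀ N ⊆ H, (N : Set (Finset α)).PairwiseDisjoint id → N.card ≤ M.card)
    (R N : Finset (Finset α)) (hRM : R ⊆ M) (hNH : N ⊆ H)
    (hND : (N : Set (Finset α)).PairwiseDisjoint id)
    (hdisj : ∀ f ∈ N, ∀ g ∈ M, g ∉ R → Disjoint f g)
    (hout : ∀ f ∈ N, f ∉ M)
    (hcard : R.card < N.card) : False := by
  classical
  have h1 : Disjoint (M \ R) N := by
    rw [Finset.disjoint_right]
    intro f hf hfM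
    exact hout f hf (Finset.mem_sdiff.1 hfM).1
  have hM'H : (M \ R) ∪ N ⊆ H :=
    Finset.union_subset ((Finset.sdiff_subset).trans hMH) hNH
  have hPD : (((M \ R) ∪ N : Finset (Finset α)) : Set (Finset α)).PairwiseDisjoint id := by
    intro p hp q hq hne
    rw [Finset.coe_union, Set.mem_union, Finset.mem_coe, Finset.mem_coe,
      Finset.mem_sdiff] at hp hq
    rcases hp with ⟨hpM, hpR⟩ | hpN
    · rcases hq with ⟨hqM, hqR⟩ | hqN
      · exact hMD hpM hqM hne
      · exact (hdisj q hqN p hpM hpR).symm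
    · rcases hq with ⟨hqM, hqR⟩ | hqN
      · exact hdisj p hpN q hqM hqR
      · exact hND hpN hqN hne
  have hle := hmax _ hM'H hPD
  rw [Finset.card_union_of_disjoint h1, Finset.card_sdiff_of_subset hRM] at hle
  have := Finset.card_le_card hRM
  omega

lemma aux_pd2 (f1 f2 : Finset α) (h : Disjoint f1 f2) :
    (({f1, f2} : Finset (Finset α)) : Set (Finset α)).PairwiseDisjoint id := by
  intro p hp q hq hne
  simp only [Finset.coe_insert, Set.mem_insert_iff, Finset.coe_singleton,
    Set.mem_singleton_iff] at hp hq
  rcases hp with rfl | rfl <;> rcases hq with rfl | rfl <;>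
    first | exact absurd rfl hne | exact h | exact h.symm

lemma aux_pd3 (f1 f2 f3 : Finset α) (h12 : Disjoint f1 f2) (h13 : Disjoint f1 f3)
    (h23 : Disjoint f2 f3) :
    (({f1, f2, f3} : Finset (Finset α)) : Set (Finset α)).PairwiseDisjoint id := by
  intro p hp q hq hne
  simp only [Finset.coe_insert, Set.mem_insert_iff, Finset.coe_singleton,
    Set.mem_singleton_iff] at hp hq
  rcases hp with rfl | rfl | rfl <;> rcases hq with rfl | rfl | rfl <;>
    first
    | exact absurd rfl hne
    | exact h12
    | exact h12.symm
    | exact h13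
    | exact h13.symm
    | exact h23
    | exact h23.symm

end AUX

/-- Bollobás–Daykin–Erdős, 3-uniform case. If `H` is a 3-uniform
hypergraph on `n > 54(d+1)` vertices with minimum vertex degree greater than
`C(n-1,2) - C(n-d,2)`, then `H` contains a matching of size at least `d`. -/
theorem stmt_2 (d : ℕ) (V : Type) [Fintype V] [DecidableEq V]
    (H : Finset (Finset V)) (h3 : ∀ e ∈ H, e.card = 3)
    (hn : 54 * (d + 1) < Fintype.card V)
    (hdeg : ∀ v : V, Nat.choose (Fintype.card V - 1) 2 - Nat.choose (Fintype.card V - d) 2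
      < (H.filter fun e => v ∈ e).card) :
    ∃ M ⊆ H, (M : Set (Finset V)).PairwiseDisjoint id ∧ d ≤ M.card := by
  classical
  set n := Fintype.card V with hn_def
  have hVne : Nonempty V := Fintype.card_pos_iff.1 (by omega)
  set 𝓜 := H.powerset.filter
    (fun (N : Finset (Finset V)) => (N : Set (Finset V)).PairwiseDisjoint id) with h𝓜
  have h𝓜ne : 𝓜.Nonempty := ⟨∅, by simp [h𝓜]⟩
  obtain ⟨M, hM𝓜, hMmax⟩ := 𝓜.exists_max_image (fun N => N.card) h𝓜ne
  rw [h𝓜, Finset.mem_filter, Finset.mem_powerset] at hM𝓜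
  obtain ⟨hMH, hMD⟩ := hM𝓜
  by_cases hd : d ≤ M.card
  · exact ⟨M, hMH, hMD, hd⟩
  exfalso
  push_neg at hd
  set m := M.card with hm
  have hmax : ∀ N ⊆ H, (N : Set (Finset V)).PairwiseDisjoint id → N.card ≤ m := by
    intro N h1 h2
    exact hMmax N (by rw [h𝓜, Finset.mem_filter, Finset.mem_powerset]; exact ⟨h1, h2⟩)
  -- covered and uncovered vertices
  set W := M.biUnion id with hW
  have hWsub : ∀ g ∈ M, g ⊆ W := fun g hg => Finset.subset_biUnion_of_mem id hg
  have hcard3 : ∀ g ∈ M, g.card = 3 := fun g hg => h3 g (hMH hg)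
  have hWcard : W.card ≤ 3 * m := by
    calc W.card ≤ ∑ g ∈ M, (id g).card := Finset.card_biUnion_le
      _ = ∑ g ∈ M, 3 := Finset.sum_congr rfl (fun g hg => hcard3 g hg)
      _ = 3 * m := by rw [Finset.sum_const, smul_eq_mul, mul_comm]
  set U := Finset.univ \ W with hU
  have hUmem : ∀ u : V, u ∈ U ↔ u ∉ W := by
    intro u; rw [hU, Finset.mem_sdiff]; simp
  have hUcard : n - 3 * m ≤ U.card := by
    rw [hU, Finset.card_sdiff_of_subset (Finset.subset_univ W), Finset.card_univ, ← hn_def]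
    omega
  have hMdisj : ∀ g ∈ M, ∀ g' ∈ M, g ≠ g' → Disjoint g g' :=
    fun g hg g' hg' hne => hMD hg hg' hne
  -- link graphs
  set G : V → Finset (Finset V) :=
    fun w => (U.powersetCard 2).filter (fun p => insert w p ∈ H) with hG
  have hGmem : ∀ w p, p ∈ G w → p ⊆ U ∧ p.card = 2 ∧ insert w p ∈ H := by
    intro w p hp
    rw [hG, Finset.mem_filter, Finset.mem_powersetCard] at hp
    exact ⟨hp.1.1, hp.1.2, hp.2⟩
  set Strong : V → Prop := fun w =>
    ∃ F, F ⊆ G w ∧ (F : Set (Finset V)).PairwiseDisjoint id ∧ F.card = 4 with hStrong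
  -- strong and weak edges
  set SE := M.filter (fun g => ∃ x ∈ g, Strong x) with hSE
  set WE := M.filter (fun g => ¬ ∃ x ∈ g, Strong x) with hWE
  set s := SE.card with hs
  set t := WE.card with ht
  have hst : s + t = m := by
    rw [hs, ht, hSE, hWE]
    exact Finset.card_filter_add_card_filter_not _
  have hxv' : ∀ g ∈ SE, ∃ x, x ∈ g ∧ Strong x := by
    intro g hg
    rw [hSE, Finset.mem_filter] at hg
    obtain ⟨x, hx1, hx2⟩ := hg.2
    exact ⟨x, hx1, hx2⟩
  choose! xv hxv1 hxv2 using hxv'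
  have hSEM : SE ⊆ M := Finset.filter_subset _ _
  have hWEM : WE ⊆ M := Finset.filter_subset _ _
  set X := SE.image xv with hX
  have hXcard : X.card ≤ s := Finset.card_image_le
  have hXW : X ⊆ W := by
    intro x hx
    rw [hX, Finset.mem_image] at hx
    obtain ⟨g, hg, rfl⟩ := hx
    exact hWsub g (hSEM hg) (hxv1 g hg)
  -- weak vertices and covers
  set VW := WE.biUnion id with hVW
  have hVWcard : VW.card ≤ 3 * t := by
    calc VW.card ≤ ∑ g ∈ WE, (id g).card := Finset.card_biUnion_le
      _ = ∑ g ∈ WE, 3 := Finset.sum_congr rfl (fun g hg => hcard3 g (hWEM hg))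
      _ = 3 * t := by rw [Finset.sum_const, smul_eq_mul, mul_comm]
  have hVWweak : ∀ w ∈ VW, ¬ Strong w := by
    intro w hw hSw
    rw [hVW, Finset.mem_biUnion] at hw
    obtain ⟨g, hg, hwg⟩ := hw
    rw [hWE, Finset.mem_filter] at hg
    exact hg.2 ⟨w, hwg, hSw⟩
  have hcov : ∀ w ∈ VW, ∃ Cw : Finset V, Cw.card ≤ 6 ∧ ∀ p ∈ G w, ¬ Disjoint p Cw := by
    intro w hw
    refine aux_cover (G w) (fun p hp => (hGmem w p hp).2.1) ?_
    intro hF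
    exact hVWweak w hw hF
  choose! Cov hCov1 hCov2 using hcov
  set T := VW.biUnion Cov with hT
  have hTcard : T.card ≤ 6 * VW.card := by
    calc T.card ≤ ∑ w ∈ VW, (Cov w).card := Finset.card_biUnion_le
      _ ≤ ∑ w ∈ VW, 6 := Finset.sum_le_sum (fun w hw => hCov1 w hw)
      _ = 6 * VW.card := by rw [Finset.sum_const, smul_eq_mul, mul_comm]
  -- choose the vertex v
  have htm : t ≤ m := by omega
  have hmd : m + 1 ≤ d := by omega
  have hUT : (U \ T).Nonempty := by
    rw [← Finset.card_pos]
    have h1 : U.card - T.card ≤ (U \ T).card := Finset.le_card_sdiff T U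
    have h2 : T.card ≤ 6 * (3 * t) := by
      calc T.card ≤ 6 * VW.card := hTcard
        _ ≤ 6 * (3 * t) := by omega
    omega
  obtain ⟨v, hv⟩ := hUT
  rw [Finset.mem_sdiff] at hv
  obtain ⟨hvU, hvT⟩ := hv
  have hvW : v ∉ W := (hUmem v).1 hvU
  have hvCov : ∀ w ∈ VW, v ∉ Cov w := by
    intro w hw hvc
    exact hvT (Finset.mem_biUnion.2 ⟨w, hw, hvc⟩)
  -- pair families
  set PP := (Finset.univ.erase v).powersetCard 2 with hPP
  set PA := PP.filter (fun p => (p ∩ X).Nonempty) with hPA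
  set PB1 := VW.biUnion (fun w => (Cov w).image (fun q => ({w, q} : Finset V))) with hPB1
  set PB2 := VW.biUnion (fun w => W.image (fun q => ({w, q} : Finset V))) with hPB2
  -- specialization of the swap lemma
  have hswap : ∀ R N : Finset (Finset V), R ⊆ M → N ⊆ H →
      (N : Set (Finset V)).PairwiseDisjoint id →
      (∀ f ∈ N, ∀ g ∈ M, g ∉ R → Disjoint f g) →
      (∀ f ∈ N, ∃ u ∈ f, u ∈ U) → R.card < N.card → False := by
    intro R N h1 h2 h3' h4 h5 h6
    refine aux_swap H M hMH hMD hmax R N h1 h2 h3' h4 ?_ h6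
    intro f hf hfM
    obtain ⟨u, hu1, hu2⟩ := h5 f hf
    exact ((hUmem u).1 hu2) (hWsub f hfM hu1)
  have hpick : ∀ x : V, Strong x → ∀ B : Finset V, B.card ≤ 3 →
      ∃ p, p ∈ G x ∧ Disjoint p B := by
    intro x hx B hB
    rw [hStrong] at hx
    obtain ⟨F, hF1, hF2, hF3⟩ := hx
    obtain ⟨p, hp, hpd⟩ := aux_pick F hF2 (by omega) B hB
    exact ⟨p, hF1 hp, hpd⟩
  -- helper facts
  have hUg : ∀ u : V, u ∈ U → ∀ g ∈ M, u ∉ g := by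
    intro u hu g hg hug
    exact ((hUmem u).1 hu) (hWsub g hg hug)
  have hmem3 : ∀ (x y u : V), u ∈ insert v ({x, y} : Finset V) → u = v ∨ u = x ∨ u = y := by
    intro x y u hu
    simp only [Finset.mem_insert, Finset.mem_singleton] at hu
    exact hu
  have hnewM : ∀ (x : V) (g : Finset V), g ∈ M → x ∈ g → ∀ P : Finset V, P ⊆ U →
      ∀ g' ∈ M, g' ≠ g → Disjoint (insert x P) g' := by
    intro x g hgM hxg P hPU g' hg' hne
    rw [Finset.disjoint_left]
    intro u hu hug'
    rcases Finset.mem_insert.1 hu with rfl | huP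
    · exact (Finset.disjoint_left.1 (hMdisj g hgM g' hg' (Ne.symm hne)) hxg) hug'
    · exact ((hUmem u).1 (hPU huP)) (hWsub g' hg' hug')
  -- classification of edges at v
  have hclass : ∀ e ∈ H, v ∈ e → e.erase v ∈ PA ∪ PB1 ∪ PB2 := by
    intro e heH hve
    have hpc : (e.erase v).card = 2 := by
      rw [Finset.card_erase_of_mem hve, h3 e heH]
    obtain ⟨a, b, hab, hpab⟩ := Finset.card_eq_two.1 hpc
    have hvab : v ∉ ({a, b} : Finset V) := by
      rw [← hpab]; exact Finset.notMem_erase v e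
    have hva : v ≠ a := by
      intro h; exact hvab (by rw [h]; exact Finset.mem_insert_self a {b})
    have hvb : v ≠ b := by
      intro h; apply hvab
      rw [h]; exact Finset.mem_insert_of_mem (Finset.mem_singleton_self b)
    have heq : insert v ({a, b} : Finset V) = e := by
      rw [← hpab, Finset.insert_erase hve]
    have heH' : insert v ({a, b} : Finset V) ∈ H := by rw [heq]; exact heH
    rw [hpab]
    have hgoal : ∀ p : Finset V, p ∈ PA ∨ p ∈ PB1 ∪ PB2 → p ∈ PA ∪ PB1 ∪ PB2 := by
      intro p hp
      simp only [Finset.mem_union] at hp ⊢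
      tauto
    -- the key asymmetric step
    have key : ∀ a b : V, a ≠ b → v ≠ a → v ≠ b →
        insert v ({a, b} : Finset V) ∈ H →
        a ∉ X → b ∉ X → a ∈ W →
        ({a, b} : Finset V) ∈ PB1 ∪ PB2 := by
      clear hvab hva hvb heq heH' hpab hab hpc heH hve
      intro a b hab hva hvb heH' haX hbX haW
      by_cases haVW : a ∈ VW
      · by_cases hbW : b ∈ W
        · refine Finset.mem_union_right _ (Finset.mem_biUnion.2 ⟨a, haVW, ?_⟩)
          exact Finset.mem_image.2 ⟨b, hbW, rfl⟩
        · have hbU : b ∈ U := (hUmem b).2 hbW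
          have hpair : ({v, b} : Finset V) ∈ G a := by
            simp only [hG, Finset.mem_filter, Finset.mem_powersetCard]
            refine ⟨⟨?_, Finset.card_pair hvb⟩, ?_⟩
            · intro u hu
              rcases Finset.mem_insert.1 hu with rfl | hu
              · exact hvU
              · rw [Finset.mem_singleton] at hu; subst hu; exact hbU
            · have hcomm : insert a ({v, b} : Finset V) = insert v ({a, b} : Finset V) :=
                Finset.insert_comm a v {b}
              rw [hcomm]; exact heH'
          have hnd := hCov2 a haVW _ hpair
          rw [Finset.not_disjoint_iff] at hnd
          obtain ⟨q, hq1, hq2⟩ := hnd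
          rcases Finset.mem_insert.1 hq1 with rfl | hq1
          · exact absurd hq2 (hvCov a haVW)
          · rw [Finset.mem_singleton] at hq1
            subst hq1
            refine Finset.mem_union_left _ (Finset.mem_biUnion.2 ⟨a, haVW, ?_⟩)
            exact Finset.mem_image.2 ⟨q, hq2, rfl⟩
      · -- a lies in a strong edge
        obtain ⟨g, hgM, hag⟩ : ∃ g ∈ M, a ∈ g := by
          have haW' := haW
          rw [hW] at haW'
          obtain ⟨g, hg, hag⟩ := Finset.mem_biUnion.1 haW'
          exact ⟨g, hg, hag⟩
        have hgSE : g ∈ SE := by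
          by_contra hgSE
          apply haVW
          rw [hVW, Finset.mem_biUnion]
          refine ⟨g, ?_, hag⟩
          rw [hWE, Finset.mem_filter]
          refine ⟨hgM, fun hex => hgSE ?_⟩
          rw [hSE, Finset.mem_filter]; exact ⟨hgM, hex⟩
        have hxg : xv g ∈ g := hxv1 g hgSE
        have hxS : Strong (xv g) := hxv2 g hgSE
        have hxgX : xv g ∈ X := by rw [hX]; exact Finset.mem_image_of_mem xv hgSE
        have hax : a ≠ xv g := fun h => haX (h ▸ hxgX)
        have hxgW : xv g ∈ W := hWsub g hgM hxg
        have hvx : v ≠ xv g := fun h => hvW (h ▸ hxgW)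
        by_cases hbW : b ∈ W
        · by_cases hbVW : b ∈ VW
          · rw [Finset.pair_comm]
            refine Finset.mem_union_right _ (Finset.mem_biUnion.2 ⟨b, hbVW, ?_⟩)
            exact Finset.mem_image.2 ⟨a, haW, rfl⟩
          · exfalso
            obtain ⟨g', hg'M, hbg'⟩ : ∃ g' ∈ M, b ∈ g' := by
              have hbW' := hbW
              rw [hW] at hbW'
              obtain ⟨g', hg', hbg'⟩ := Finset.mem_biUnion.1 hbW'
              exact ⟨g', hg', hbg'⟩
            have hg'SE : g' ∈ SE := by
              by_contra hg'SE
              apply hbVW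
              rw [hVW, Finset.mem_biUnion]
              refine ⟨g', ?_, hbg'⟩
              rw [hWE, Finset.mem_filter]
              refine ⟨hg'M, fun hex => hg'SE ?_⟩
              rw [hSE, Finset.mem_filter]; exact ⟨hg'M, hex⟩
            have hx'g : xv g' ∈ g' := hxv1 g' hg'SE
            have hx'S : Strong (xv g') := hxv2 g' hg'SE
            have hx'X : xv g' ∈ X := by rw [hX]; exact Finset.mem_image_of_mem xv hg'SE
            have hbx' : b ≠ xv g' := fun h => hbX (h ▸ hx'X)
            by_cases hgg' : g = g'
            · -- swap (iii) : a and b in the same strong edge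
              subst hgg'
              obtain ⟨P, hPG, hPd⟩ := hpick (xv g) hxS {v} (by simp)
              obtain ⟨hPU, hP2, hPH⟩ := hGmem _ _ hPG
              have hvP : v ∉ P := Finset.disjoint_right.1 hPd (Finset.mem_singleton_self v)
              have hPne : P.Nonempty := Finset.card_pos.1 (by omega)
              have hed : Disjoint (insert v ({a, b} : Finset V)) (insert (xv g) P) := by
                rw [Finset.disjoint_left]
                intro u hu hu'
                have hu4 : u = xv g ∨ u ∈ P := Finset.mem_insert.1 hu'
                rcases hmem3 a b u hu with h1 | h1 | h1
                · rcases hu4 with h | h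
                  · exact hvx (h1 ▸ h)
                  · exact hvP (h1 ▸ h)
                · rcases hu4 with h | h
                  · exact hax (h1 ▸ h)
                  · exact ((hUmem a).1 (hPU (h1 ▸ h))) haW
                · rcases hu4 with h | h
                  · exact hbx' (h1 ▸ h)
                  · exact ((hUmem b).1 (hPU (h1 ▸ h))) hbW
              refine hswap {g} {insert v ({a, b} : Finset V), insert (xv g) P}
                (Finset.singleton_subset_iff.2 hgM) ?_ (aux_pd2 _ _ hed) ?_ ?_ ?_
              · intro f hf
                simp only [Finset.mem_insert, Finset.mem_singleton] at hf
                rcases hf with rfl | rfl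
                · exact heH'
                · exact hPH
              · intro f hf g'' hg'' hgR
                simp only [Finset.mem_singleton] at hgR
                simp only [Finset.mem_insert, Finset.mem_singleton] at hf
                rcases hf with rfl | rfl
                · rw [Finset.disjoint_left]
                  intro u hu hug'
                  rcases hmem3 a b u hu with h1 | h1 | h1
                  · exact hUg v hvU g'' hg'' (h1 ▸ hug')
                  · exact Finset.disjoint_left.1 (hMdisj g hgM g'' hg'' (Ne.symm hgR)) hag (h1 ▸ hug')
                  · exact Finset.disjoint_left.1 (hMdisj g hgM g'' hg'' (Ne.symm hgR)) hbg' (h1 ▸ hug')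
                · exact hnewM (xv g) g hgM hxg P hPU g'' hg'' hgR
              · intro f hf
                simp only [Finset.mem_insert, Finset.mem_singleton] at hf
                rcases hf with rfl | rfl
                · exact ⟨v, Finset.mem_insert_self _ _, hvU⟩
                · obtain ⟨u, hu⟩ := hPne
                  exact ⟨u, Finset.mem_insert_of_mem hu, hPU hu⟩
              · have hne : insert v ({a, b} : Finset V) ≠ insert (xv g) P := by
                  intro h
                  have hvmem : v ∈ insert (xv g) P := h ▸ Finset.mem_insert_self v {a, b}
                  rcases Finset.mem_insert.1 hvmem with h' | h'
                  · exact hvx h'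
                  · exact hvP h'
                rw [Finset.card_singleton, Finset.card_insert_of_notMem
                  (by rw [Finset.mem_singleton]; exact hne), Finset.card_singleton]
                omega
            · -- swap (ii) : a and b in different strong edges
              have hx'W : xv g' ∈ W := hWsub g' hg'M hx'g
              have hvx' : v ≠ xv g' := fun h => hvW (h ▸ hx'W)
              have hax' : a ≠ xv g' := fun h =>
                (Finset.disjoint_left.1 (hMdisj g hgM g' hg'M hgg') hag) (h ▸ hx'g)
              have hbx : b ≠ xv g := fun h =>
                (Finset.disjoint_left.1 (hMdisj g' hg'M g hgM (Ne.symm hgg')) hbg') (h ▸ hxg)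
              have hxx' : xv g ≠ xv g' := fun h =>
                (Finset.disjoint_left.1 (hMdisj g hgM g' hg'M hgg') hxg) (h ▸ hx'g)
              obtain ⟨P1, hP1G, hP1d⟩ := hpick (xv g) hxS {v} (by simp)
              obtain ⟨hP1U, hP12, hP1H⟩ := hGmem _ _ hP1G
              have hvP1 : v ∉ P1 := Finset.disjoint_right.1 hP1d (Finset.mem_singleton_self v)
              have hP1ne : P1.Nonempty := Finset.card_pos.1 (by omega)
              obtain ⟨P2, hP2G, hP2d⟩ := hpick (xv g') hx'S (insert v P1)
                (by rw [Finset.card_insert_of_notMem hvP1]; omega)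
              obtain ⟨hP2U, hP22, hP2H⟩ := hGmem _ _ hP2G
              have hvP2 : v ∉ P2 := Finset.disjoint_right.1 hP2d (Finset.mem_insert_self _ _)
              have hP2ne : P2.Nonempty := Finset.card_pos.1 (by omega)
              have hP12d : Disjoint P1 P2 := by
                rw [Finset.disjoint_left]
                intro u hu hu2
                exact (Finset.disjoint_right.1 hP2d (Finset.mem_insert_of_mem hu)) hu2
              have hed1 : Disjoint (insert v ({a, b} : Finset V)) (insert (xv g) P1) := by
                rw [Finset.disjoint_left]
                intro u hu hu'
                have hu4 : u = xv g ∨ u ∈ P1 := Finset.mem_insert.1 hu'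
                rcases hmem3 a b u hu with h1 | h1 | h1
                · rcases hu4 with h | h
                  · exact hvx (h1 ▸ h)
                  · exact hvP1 (h1 ▸ h)
                · rcases hu4 with h | h
                  · exact hax (h1 ▸ h)
                  · exact ((hUmem a).1 (hP1U (h1 ▸ h))) haW
                · rcases hu4 with h | h
                  · exact hbx (h1 ▸ h)
                  · exact ((hUmem b).1 (hP1U (h1 ▸ h))) hbW
              have hed2 : Disjoint (insert v ({a, b} : Finset V)) (insert (xv g') P2) := by
                rw [Finset.disjoint_left]
                intro u hu hu'
                have hu4 : u = xv g' ∨ u ∈ P2 := Finset.mem_insert.1 hu'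
                rcases hmem3 a b u hu with h1 | h1 | h1
                · rcases hu4 with h | h
                  · exact hvx' (h1 ▸ h)
                  · exact hvP2 (h1 ▸ h)
                · rcases hu4 with h | h
                  · exact hax' (h1 ▸ h)
                  · exact ((hUmem a).1 (hP2U (h1 ▸ h))) haW
                · rcases hu4 with h | h
                  · exact hbx' (h1 ▸ h)
                  · exact ((hUmem b).1 (hP2U (h1 ▸ h))) hbW
              have hed3 : Disjoint (insert (xv g) P1) (insert (xv g') P2) := by
                rw [Finset.disjoint_left]
                intro u hu hu'
                have hu4 : u = xv g' ∨ u ∈ P2 := Finset.mem_insert.1 hu'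
                rcases Finset.mem_insert.1 hu with h1 | h1
                · rcases hu4 with h | h
                  · exact hxx' (h1 ▸ h)
                  · exact ((hUmem (xv g)).1 (hP2U (h1 ▸ h))) hxgW
                · rcases hu4 with h | h
                  · exact ((hUmem u).1 (hP1U h1)) (h ▸ hx'W)
                  · exact (Finset.disjoint_left.1 hP12d h1) h
              have hRcard : ({g, g'} : Finset (Finset V)).card = 2 := Finset.card_pair hgg'
              refine hswap {g, g'}
                {insert v ({a, b} : Finset V), insert (xv g) P1, insert (xv g') P2}
                ?_ ?_ (aux_pd3 _ _ _ hed1 hed2 hed3) ?_ ?_ ?_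
              · intro f hf
                simp only [Finset.mem_insert, Finset.mem_singleton] at hf
                rcases hf with rfl | rfl
                · exact hgM
                · exact hg'M
              · intro f hf
                simp only [Finset.mem_insert, Finset.mem_singleton] at hf
                rcases hf with rfl | rfl | rfl
                · exact heH'
                · exact hP1H
                · exact hP2H
              · intro f hf g'' hg'' hgR
                simp only [Finset.mem_insert, Finset.mem_singleton] at hgR
                push_neg at hgR
                simp only [Finset.mem_insert, Finset.mem_singleton] at hf
                rcases hf with rfl | rfl | rfl
                · rw [Finset.disjoint_left]
                  intro u hu hug'
                  rcases hmem3 a b u hu with h1 | h1 | h1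
                  · exact hUg v hvU g'' hg'' (h1 ▸ hug')
                  · exact Finset.disjoint_left.1
                      (hMdisj g hgM g'' hg'' (Ne.symm hgR.1)) hag (h1 ▸ hug')
                  · exact Finset.disjoint_left.1
                      (hMdisj g' hg'M g'' hg'' (Ne.symm hgR.2)) hbg' (h1 ▸ hug')
                · exact hnewM (xv g) g hgM hxg P1 hP1U g'' hg'' hgR.1
                · exact hnewM (xv g') g' hg'M hx'g P2 hP2U g'' hg'' hgR.2
              · intro f hf
                simp only [Finset.mem_insert, Finset.mem_singleton] at hf
                rcases hf with rfl | rfl | rfl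
                · exact ⟨v, Finset.mem_insert_self _ _, hvU⟩
                · obtain ⟨u, hu⟩ := hP1ne
                  exact ⟨u, Finset.mem_insert_of_mem hu, hP1U hu⟩
                · obtain ⟨u, hu⟩ := hP2ne
                  exact ⟨u, Finset.mem_insert_of_mem hu, hP2U hu⟩
              · have hne1 : insert v ({a, b} : Finset V) ≠ insert (xv g) P1 := by
                  intro h
                  have hvmem : v ∈ insert (xv g) P1 := h ▸ Finset.mem_insert_self v {a, b}
                  rcases Finset.mem_insert.1 hvmem with h' | h'
                  · exact hvx h'
                  · exact hvP1 h'
                have hne2 : insert v ({a, b} : Finset V) ≠ insert (xv g') P2 := by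
                  intro h
                  have hvmem : v ∈ insert (xv g') P2 := h ▸ Finset.mem_insert_self v {a, b}
                  rcases Finset.mem_insert.1 hvmem with h' | h'
                  · exact hvx' h'
                  · exact hvP2 h'
                have hne3 : insert (xv g) P1 ≠ insert (xv g') P2 := by
                  intro h
                  have hxmem : xv g ∈ insert (xv g') P2 := h ▸ Finset.mem_insert_self _ _
                  rcases Finset.mem_insert.1 hxmem with h' | h'
                  · exact hxx' h'
                  · exact ((hUmem (xv g)).1 (hP2U h')) hxgW
                rw [hRcard, Finset.card_insert_of_notMem (by
                    simp only [Finset.mem_insert, Finset.mem_singleton]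
                    push_neg
                    exact ⟨hne1, hne2⟩),
                  Finset.card_insert_of_notMem (by
                    rw [Finset.mem_singleton]; exact hne3), Finset.card_singleton]
                omega
        · -- b uncovered : swap (i)
          exfalso
          have hbU : b ∈ U := (hUmem b).2 hbW
          obtain ⟨P, hPG, hPd⟩ := hpick (xv g) hxS {v, b}
            (by rw [Finset.card_pair hvb]; omega)
          obtain ⟨hPU, hP2, hPH⟩ := hGmem _ _ hPG
          have hvP : v ∉ P := Finset.disjoint_right.1 hPd (Finset.mem_insert_self v {b})
          have hbP : b ∉ P := Finset.disjoint_right.1 hPd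
            (Finset.mem_insert_of_mem (Finset.mem_singleton_self b))
          have hPne : P.Nonempty := Finset.card_pos.1 (by omega)
          have hbx : b ≠ xv g := fun h => ((hUmem b).1 hbU) (h ▸ hxgW)
          have hed : Disjoint (insert v ({a, b} : Finset V)) (insert (xv g) P) := by
            rw [Finset.disjoint_left]
            intro u hu hu'
            have hu4 : u = xv g ∨ u ∈ P := Finset.mem_insert.1 hu'
            rcases hmem3 a b u hu with h1 | h1 | h1
            · rcases hu4 with h | h
              · exact hvx (h1 ▸ h)
              · exact hvP (h1 ▸ h)
            · rcases hu4 with h | h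
              · exact hax (h1 ▸ h)
              · exact ((hUmem a).1 (hPU (h1 ▸ h))) haW
            · rcases hu4 with h | h
              · exact hbx (h1 ▸ h)
              · exact hbP (h1 ▸ h)
          refine hswap {g} {insert v ({a, b} : Finset V), insert (xv g) P}
            (Finset.singleton_subset_iff.2 hgM) ?_ (aux_pd2 _ _ hed) ?_ ?_ ?_
          · intro f hf
            simp only [Finset.mem_insert, Finset.mem_singleton] at hf
            rcases hf with rfl | rfl
            · exact heH'
            · exact hPH
          · intro f hf g'' hg'' hgR
            simp only [Finset.mem_singleton] at hgR
            simp only [Finset.mem_insert, Finset.mem_singleton] at hf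
            rcases hf with rfl | rfl
            · rw [Finset.disjoint_left]
              intro u hu hug'
              rcases hmem3 a b u hu with h1 | h1 | h1
              · exact hUg v hvU g'' hg'' (h1 ▸ hug')
              · exact Finset.disjoint_left.1 (hMdisj g hgM g'' hg'' (Ne.symm hgR)) hag (h1 ▸ hug')
              · exact hUg b hbU g'' hg'' (h1 ▸ hug')
            · exact hnewM (xv g) g hgM hxg P hPU g'' hg'' hgR
          · intro f hf
            simp only [Finset.mem_insert, Finset.mem_singleton] at hf
            rcases hf with rfl | rfl
            · exact ⟨v, Finset.mem_insert_self _ _, hvU⟩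
            · obtain ⟨u, hu⟩ := hPne
              exact ⟨u, Finset.mem_insert_of_mem hu, hPU hu⟩
          · have hne : insert v ({a, b} : Finset V) ≠ insert (xv g) P := by
              intro h
              have hvmem : v ∈ insert (xv g) P := h ▸ Finset.mem_insert_self v {a, b}
              rcases Finset.mem_insert.1 hvmem with h' | h'
              · exact hvx h'
              · exact hvP h'
            rw [Finset.card_singleton, Finset.card_insert_of_notMem
              (by rw [Finset.mem_singleton]; exact hne), Finset.card_singleton]
            omega
    -- main case split
    by_cases hPAc : ((({a, b} : Finset V)) ∩ X).Nonempty
    · refine hgoal _ (Or.inl ?_)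
      rw [hPA, Finset.mem_filter]
      refine ⟨?_, hPAc⟩
      rw [hPP, Finset.mem_powersetCard]
      refine ⟨?_, Finset.card_pair hab⟩
      intro u hu
      simp only [Finset.mem_insert, Finset.mem_singleton] at hu
      rcases hu with rfl | rfl
      · exact Finset.mem_erase.2 ⟨Ne.symm hva, Finset.mem_univ u⟩
      · exact Finset.mem_erase.2 ⟨Ne.symm hvb, Finset.mem_univ u⟩
    · have haX : a ∉ X := fun h =>
        hPAc ⟨a, Finset.mem_inter.2 ⟨Finset.mem_insert_self a {b}, h⟩⟩
      have hbX : b ∉ X := fun h =>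
        hPAc ⟨b, Finset.mem_inter.2
          ⟨Finset.mem_insert_of_mem (Finset.mem_singleton_self b), h⟩⟩
      by_cases haW : a ∈ W
      · exact hgoal _ (Or.inr (key a b hab hva hvb heH' haX hbX haW))
      · by_cases hbW : b ∈ W
        · have heH'' : insert v ({b, a} : Finset V) ∈ H := by
            rw [Finset.pair_comm b a]; exact heH'
          have hkey := key b a (Ne.symm hab) hvb hva heH'' hbX haX hbW
          rw [Finset.pair_comm a b]
          exact hgoal _ (Or.inr hkey)
        · exfalso
          have haU : a ∈ U := (hUmem a).2 haW
          have hbU : b ∈ U := (hUmem b).2 hbW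
          refine hswap ∅ {insert v ({a, b} : Finset V)} (Finset.empty_subset M)
            ?_ ?_ ?_ ?_ ?_
          · rw [Finset.singleton_subset_iff]; exact heH'
          · intro p hp q hq hne
            simp only [Finset.coe_singleton, Set.mem_singleton_iff] at hp hq
            exact absurd (hp.trans hq.symm) hne
          · intro f hf g' hg' _
            simp only [Finset.mem_singleton] at hf
            subst hf
            rw [Finset.disjoint_left]
            intro u hu hug'
            rcases hmem3 a b u hu with h1 | h1 | h1
            · exact hUg v hvU g' hg' (h1 ▸ hug')
            · exact hUg a haU g' hg' (h1 ▸ hug')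
            · exact hUg b hbU g' hg' (h1 ▸ hug')
          · intro f hf
            simp only [Finset.mem_singleton] at hf
            subst hf
            exact ⟨v, Finset.mem_insert_self _ _, hvU⟩
          · simp
  -- counting
  have hdegle : (H.filter (fun e => v ∈ e)).card ≤ PA.card + PB1.card + PB2.card := by
    have hinj : Set.InjOn (fun e => e.erase v) ((H.filter (fun e => v ∈ e)) : Set (Finset V)) := by
      intro e1 h1 e2 h2 heq
      rw [Finset.mem_coe, Finset.mem_filter] at h1 h2
      rw [← Finset.insert_erase h1.2, ← Finset.insert_erase h2.2]
      simp only at heq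
      rw [heq]
    have himg : (H.filter (fun e => v ∈ e)).image (fun e => e.erase v) ⊆ PA ∪ PB1 ∪ PB2 := by
      intro p hp
      rw [Finset.mem_image] at hp
      obtain ⟨e, he, rfl⟩ := hp
      rw [Finset.mem_filter] at he
      exact hclass e he.1 he.2
    calc (H.filter (fun e => v ∈ e)).card
        = ((H.filter (fun e => v ∈ e)).image (fun e => e.erase v)).card :=
          (Finset.card_image_of_injOn hinj).symm
      _ ≤ (PA ∪ PB1 ∪ PB2).card := Finset.card_le_card himg
      _ ≤ (PA ∪ PB1).card + PB2.card := Finset.card_union_le _ _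
      _ ≤ PA.card + PB1.card + PB2.card := by
          have := Finset.card_union_le PA PB1
          omega
  have hPB1card : PB1.card ≤ 18 * t := by
    calc PB1.card ≤ ∑ w ∈ VW, ((Cov w).image (fun q => ({w, q} : Finset V))).card :=
          Finset.card_biUnion_le
      _ ≤ ∑ w ∈ VW, 6 :=
          Finset.sum_le_sum (fun w hw => le_trans Finset.card_image_le (hCov1 w hw))
      _ = 6 * VW.card := by rw [Finset.sum_const, smul_eq_mul, mul_comm]
      _ ≤ 18 * t := by omega
  obtain ⟨B2, hB2⟩ : ∃ B2 : ℕ, B2 = (3 * t) * (3 * m) := ⟨_, rfl⟩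
  have hPB2card : PB2.card ≤ B2 := by
    rw [hB2]
    calc PB2.card ≤ ∑ w ∈ VW, (W.image (fun q => ({w, q} : Finset V))).card :=
          Finset.card_biUnion_le
      _ ≤ ∑ w ∈ VW, W.card :=
          Finset.sum_le_sum (fun w _ => Finset.card_image_le)
      _ = VW.card * W.card := by rw [Finset.sum_const, smul_eq_mul]
      _ ≤ (3 * t) * (3 * m) := Nat.mul_le_mul hVWcard hWcard
  have hPPcard : PP.card = (n - 1).choose 2 := by
    rw [hPP, Finset.card_powersetCard, Finset.card_erase_of_mem (Finset.mem_univ v),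
      Finset.card_univ, ← hn_def]
  have hXv : X ⊆ Finset.univ.erase v := by
    intro x hx
    exact Finset.mem_erase.2 ⟨fun h => hvW (h ▸ hXW hx), Finset.mem_univ x⟩
  set Pav := ((Finset.univ.erase v) \ X).powersetCard 2 with hPav
  have hPavcard : Pav.card = (n - 1 - X.card).choose 2 := by
    rw [hPav, Finset.card_powersetCard, Finset.card_sdiff_of_subset hXv,
      Finset.card_erase_of_mem (Finset.mem_univ v), Finset.card_univ, ← hn_def]
  have hdisjAP : Disjoint PA Pav := by
    rw [Finset.disjoint_left]
    intro p hp hp'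
    rw [hPA, Finset.mem_filter] at hp
    obtain ⟨q, hq⟩ := hp.2
    rw [Finset.mem_inter] at hq
    rw [hPav, Finset.mem_powersetCard] at hp'
    have := hp'.1 hq.1
    rw [Finset.mem_sdiff] at this
    exact this.2 hq.2
  have hAPP : PA.card + Pav.card ≤ (n - 1).choose 2 := by
    rw [← hPPcard, ← Finset.card_union_of_disjoint hdisjAP]
    refine Finset.card_le_card (Finset.union_subset ?_ ?_)
    · rw [hPA]; exact Finset.filter_subset _ _
    · rw [hPav, hPP]
      exact Finset.powersetCard_mono Finset.sdiff_subset
  -- final arithmetic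
  have harith : (n - d).choose 2 + (18 * t + B2) ≤ (n - 1 - X.card).choose 2 := by
    have hxs : X.card ≤ s := hXcard
    have hb : n - 1 - X.card = (n - d) + (d - 1 - X.card) := by omega
    rw [hb]
    refine le_trans ?_ (aux_choose2 (n - d) (d - 1 - X.card))
    have hj : t ≤ d - 1 - X.card := by omega
    have hbd : 18 + 3 * (3 * m) ≤ n - d := by omega
    have hmul : (18 * t + B2) ≤ (d - 1 - X.card) * (n - d) := by
      calc 18 * t + B2 = t * (18 + 3 * (3 * m)) := by rw [hB2]; ring
        _ ≤ (d - 1 - X.card) * (n - d) := Nat.mul_le_mul hj hbd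
    omega
  have hPav2 : (n - d).choose 2 + (18 * t + B2) ≤ Pav.card := by
    rw [hPavcard]; exact harith
  have hfin : (H.filter (fun e => v ∈ e)).card + (n - d).choose 2 ≤ (n - 1).choose 2 := by
    omega
  have hdv := hdeg v
  omega
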